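/- Let s be a densely defined symmetric operator on a Hilbert space K, and let (K_n)_{n≥0} be an increasing sequence of closed subspaces with dense union such that s maps K_n into K_{n+1} and ‖s η‖ ≤ C(n+1)‖η‖ for all η ∈ K_n. Then every vector in ∪_n K_n is analytic for s, and s is essentially self-adjoint on ∪_n K_n. -/

import Mathlib

set_option maxHeartbeats 1000000

open scoped ComplexConjugate

namespace Stmt7Aux

lemma choose_le_two_pow (m k : ℕ) (h : k ≤ m) : m.choose k ≤ 2 ^ m := by
  calc m.choose k ≤ ∑ j ∈ Finset.range (m+1), m.choose j :=
        Finset.single_le_sum (f := fun j => m.choose j) (fun _ _ => Nat.zero_le _)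
          (Finset.mem_range.mpr (Nat.lt_succ_of_le h))
    _ = 2 ^ m := Nat.sum_range_choose m

lemma fact_le_nat (n k : ℕ) : (n+k).factorial ≤ 2^(n+k) * (n.factorial * k.factorial) := by
  have h1 : (n+k).choose k * (k.factorial * n.factorial) = (n+k).factorial := by
    have h := Nat.choose_mul_factorial_mul_factorial (Nat.le_add_left k n)
    simpa [Nat.add_sub_cancel, mul_assoc] using h
  calc (n+k).factorial = (n+k).choose k * (k.factorial * n.factorial) := h1.symm
    _ ≤ 2^(n+k) * (k.factorial * n.factorial) :=
        Nat.mul_le_mul_right _ (choose_le_two_pow _ _ (Nat.le_add_left k n))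
    _ = 2^(n+k) * (n.factorial * k.factorial) := by ring

lemma fact_le (n k : ℕ) :
    ((n+k).factorial : ℝ) ≤ 2^(n+k) * ((n.factorial : ℝ) * (k.factorial : ℝ)) := by
  exact_mod_cast fact_le_nat n k

variable {K : Type*} [NormedAddCommGroup K] [InnerProductSpace ℂ K] [CompleteSpace K]

local notation "⟪" x ", " y "⟫" => @inner ℂ _ _ x y

/-- coefficients of the exponential series -/
noncomputable def ec (t : ℝ) (j : ℕ) : ℂ := (Complex.I * t) ^ j / (j.factorial : ℂ)

lemma norm_ec (t : ℝ) (j : ℕ) : ‖ec t j‖ = |t| ^ j / (j.factorial : ℝ) := by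
  simp [ec, norm_div, norm_pow, norm_mul, Complex.norm_real, Complex.norm_natCast]

lemma conj_ec (t : ℝ) (j : ℕ) : conj (ec t j) = (-(Complex.I * t)) ^ j / (j.factorial : ℂ) := by
  simp [ec, map_div₀, map_pow, Complex.conj_ofReal]

section Flow

variable {A : K →ₗ.[ℂ] K}

lemma pair_shift
    (hAs : ∀ x y x' y' : K, (x, y) ∈ A.graph → (x', y') ∈ A.graph → ⟪y, x'⟫ = ⟪x, y'⟫)
    {w : ℕ → K} (hw : ∀ k, (w k, w (k+1)) ∈ A.graph) :
    ∀ j k, ⟪w j, w k⟫ = ⟪w 0, w (j+k)⟫ := by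
  intro j
  induction j with
  | zero => intro k; simp
  | succ j ih =>
    intro k
    have h1 : ⟪w (j+1), w k⟫ = ⟪w j, w (k+1)⟫ := hAs _ _ _ _ (hw j) (hw k)
    rw [h1, ih (k+1)]
    congr 2
    omega

lemma norm_bound {M D : ℝ} (hD : 0 < D) {w : ℕ → K}
    (hb : ∀ k, ‖w k‖ ≤ M * D ^ k * (k.factorial : ℝ)) {t : ℝ} (ht : |t| ≤ (8 * D)⁻¹)
    (j k : ℕ) :
    ‖ec t j • w (j+k)‖ ≤ (M * D ^ k * (k.factorial : ℝ) * 2 ^ k) * (2 * D * |t|) ^ j := by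
  have hM : (0:ℝ) ≤ M := le_trans (norm_nonneg _) (by simpa using hb 0)
  have h1 : ‖ec t j • w (j+k)‖ = |t| ^ j / (j.factorial : ℝ) * ‖w (j+k)‖ := by
    rw [norm_smul, norm_ec]
  rw [h1]
  have h2 : ‖w (j+k)‖ ≤ M * D ^ (j+k) * ((j+k).factorial : ℝ) := hb (j+k)
  have h3 : ((j+k).factorial : ℝ) ≤ 2^(j+k) * ((j.factorial : ℝ) * (k.factorial : ℝ)) :=
    fact_le j k
  have hjf : (0:ℝ) < (j.factorial : ℝ) := by exact_mod_cast j.factorial_pos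
  have hkf : (0:ℝ) < (k.factorial : ℝ) := by exact_mod_cast k.factorial_pos
  have habs : (0:ℝ) ≤ |t| := abs_nonneg t
  have h4 : ‖w (j+k)‖ ≤ M * D ^ (j+k) * (2^(j+k) * ((j.factorial:ℝ) * (k.factorial:ℝ))) := by
    refine le_trans h2 ?_
    have hMD : (0:ℝ) ≤ M * D^(j+k) := mul_nonneg hM (le_of_lt (pow_pos hD _))
    calc M * D ^ (j+k) * ((j+k).factorial : ℝ)
        = M * D^(j+k) * ((j+k).factorial : ℝ) := rfl
      _ ≤ M * D^(j+k) * (2^(j+k) * ((j.factorial:ℝ) * (k.factorial:ℝ))) :=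
          mul_le_mul_of_nonneg_left h3 hMD
  calc |t| ^ j / (j.factorial : ℝ) * ‖w (j+k)‖
      ≤ |t| ^ j / (j.factorial : ℝ) * (M * D ^ (j+k) * (2^(j+k) * ((j.factorial:ℝ) * (k.factorial:ℝ)))) := by
        gcongr
    _ = (M * D ^ k * (k.factorial : ℝ) * 2 ^ k) * (2 * D * |t|) ^ j := by
        field_simp
        ring

lemma flow_summable_norm {M D : ℝ} (hD : 0 < D) {w : ℕ → K}
    (hb : ∀ k, ‖w k‖ ≤ M * D ^ k * (k.factorial : ℝ)) {t : ℝ} (ht : |t| ≤ (8 * D)⁻¹) (k : ℕ) :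
    Summable (fun j => ‖ec t j • w (j+k)‖) := by
  have hq : (0:ℝ) ≤ 2 * D * |t| := by positivity
  have hq1 : 2 * D * |t| < 1 := by
    have h1 : 2 * D * |t| ≤ 2 * D * (8*D)⁻¹ := by gcongr
    have h2 : 2 * D * (8*D)⁻¹ = 4⁻¹ := by field_simp; ring
    rw [h2] at h1; linarith
  refine Summable.of_nonneg_of_le (fun j => norm_nonneg _)
    (fun j => norm_bound hD hb ht j k) ?_
  exact (summable_geometric_of_lt_one hq hq1).mul_left _

lemma flow_summable {M D : ℝ} (hD : 0 < D) {w : ℕ → K}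
    (hb : ∀ k, ‖w k‖ ≤ M * D ^ k * (k.factorial : ℝ)) {t : ℝ} (ht : |t| ≤ (8 * D)⁻¹) (k : ℕ) :
    Summable (fun j => ec t j • w (j+k)) :=
  (flow_summable_norm hD hb ht k).of_norm

/-- the "time `t` exponential flow" applied to a family of iterates -/
noncomputable def flowW (t : ℝ) (w : ℕ → K) : ℕ → K := fun k => ∑' j, ec t j • w (j + k)

lemma flow_graph {A : K →ₗ.[ℂ] K} (hAc : IsClosed (A.graph : Set (K × K)))
    {w : ℕ → K} (hw : ∀ k, (w k, w (k+1)) ∈ A.graph)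
    {M D : ℝ} (hD : 0 < D) (hb : ∀ k, ‖w k‖ ≤ M * D ^ k * (k.factorial : ℝ))
    {t : ℝ} (ht : |t| ≤ (8 * D)⁻¹) (k : ℕ) :
    (flowW t w k, flowW t w (k+1)) ∈ A.graph := by
  have h1 := (flow_summable hD hb ht k).hasSum
  have h2 := (flow_summable hD hb ht (k+1)).hasSum
  have h3 : HasSum (fun j => ((ec t j • w (j+k), ec t j • w (j+k+1)) : K × K))
      (flowW t w k, flowW t w (k+1)) := h1.prodMk h2
  refine hAc.mem_of_tendsto h3.tendsto_sum_nat (Filter.Eventually.of_forall fun N => ?_)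
  refine Submodule.sum_mem _ (fun j _ => ?_)
  have he : ((ec t j • w (j+k), ec t j • w (j+k+1)) : K × K)
      = ec t j • ((w (j+k), w (j+k+1)) : K × K) := rfl
  rw [he]
  exact Submodule.smul_mem _ _ (hw (j+k))

lemma flow_inner_left {M D : ℝ} (hD : 0 < D) {w : ℕ → K}
    (hb : ∀ k, ‖w k‖ ≤ M * D ^ k * (k.factorial : ℝ)) {t : ℝ} (ht : |t| ≤ (8 * D)⁻¹)
    (k : ℕ) (x : K) :
    ⟪flowW t w k, x⟫ = ∑' j, conj (ec t j) * ⟪w (j+k), x⟫ := by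
  have h1 : ⟪x, flowW t w k⟫ = ∑' j, ec t j * ⟪x, w (j+k)⟫ := by
    have h := (innerSL ℂ x).map_tsum (flow_summable hD hb ht k)
    simpa [flowW, innerSL_apply_apply, inner_smul_right] using h
  calc ⟪flowW t w k, x⟫ = conj ⟪x, flowW t w k⟫ := (inner_conj_symm _ _).symm
    _ = conj (∑' j, ec t j * ⟪x, w (j+k)⟫) := by rw [h1]
    _ = ∑' j, conj (ec t j * ⟪x, w (j+k)⟫) := by
        simpa using tsum_star (f := fun j => ec t j * ⟪x, w (j+k)⟫)
    _ = ∑' j, conj (ec t j) * ⟪w (j+k), x⟫ := by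
        refine tsum_congr fun j => ?_
        rw [map_mul, inner_conj_symm]

lemma flow_inner {A : K →ₗ.[ℂ] K} {μ : ℂ} {φ : K}
    (hφ : ∀ x y : K, (x,y) ∈ A.graph → ⟪φ, y⟫ = μ * ⟪φ, x⟫)
    {w : ℕ → K} (hw : ∀ k, (w k, w (k+1)) ∈ A.graph)
    {M D : ℝ} (hD : 0 < D) (hb : ∀ k, ‖w k‖ ≤ M * D ^ k * (k.factorial : ℝ))
    {t : ℝ} (ht : |t| ≤ (8 * D)⁻¹) :
    ⟪φ, flowW t w 0⟫ = Complex.exp (Complex.I * t * μ) * ⟪φ, w 0⟫ := by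
  have hpow : ∀ j, ⟪φ, w j⟫ = μ ^ j * ⟪φ, w 0⟫ := by
    intro j; induction j with
    | zero => simp
    | succ j ih => rw [hφ _ _ (hw j), ih]; ring
  have h1 : ⟪φ, flowW t w 0⟫ = ∑' j, ec t j * ⟪φ, w (j+0)⟫ := by
    have h := (innerSL ℂ φ).map_tsum (flow_summable hD hb ht 0)
    simpa [flowW, innerSL_apply_apply, inner_smul_right] using h
  rw [h1]
  have h2 : ∀ j : ℕ, ec t j * ⟪φ, w (j+0)⟫
      = (Complex.I * t * μ)^j / (j.factorial:ℂ) * ⟪φ, w 0⟫ := by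
    intro j
    rw [show j + 0 = j from rfl, hpow j, ec, mul_pow, mul_pow]
    ring
  calc ∑' j, ec t j * ⟪φ, w (j+0)⟫
      = ∑' j, (Complex.I * t * μ)^j / (j.factorial:ℂ) * ⟪φ, w 0⟫ := tsum_congr h2
    _ = (∑' j, (Complex.I * t * μ)^j / (j.factorial:ℂ)) * ⟪φ, w 0⟫ := tsum_mul_right
    _ = Complex.exp (Complex.I * t * μ) * ⟪φ, w 0⟫ := by
        rw [Complex.exp_eq_exp_ℂ, NormedSpace.exp_eq_tsum_div]

lemma flow_norm_eq {A : K →ₗ.[ℂ] K}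
    (hAs : ∀ x y x' y' : K, (x, y) ∈ A.graph → (x', y') ∈ A.graph → ⟪y, x'⟫ = ⟪x, y'⟫)
    {w : ℕ → K} (hw : ∀ k, (w k, w (k+1)) ∈ A.graph)
    {M D : ℝ} (hD : 0 < D) (hb : ∀ k, ‖w k‖ ≤ M * D ^ k * (k.factorial : ℝ))
    {t : ℝ} (ht : |t| ≤ (8 * D)⁻¹) (k : ℕ) :
    ‖flowW t w k‖ = ‖w k‖ := by
  have hM : (0:ℝ) ≤ M := le_trans (norm_nonneg _) (by simpa using hb 0)
  set G : ℕ → ℂ := fun m => ⟪w 0, w (m + (k+k))⟫ with hG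
  set F : ℕ × ℕ → ℂ := fun p => conj (ec t p.1) * ec t p.2 * G (p.1 + p.2) with hF
  have hr : (0:ℝ) ≤ 4 * D * |t| := by positivity
  have hr1 : 4 * D * |t| < 1 := by
    have h1 : 4 * D * |t| ≤ 4 * D * (8*D)⁻¹ := by gcongr
    have h2 : 4 * D * (8*D)⁻¹ = 2⁻¹ := by field_simp; ring
    rw [h2] at h1; linarith
  set Q : ℝ := ‖w 0‖ * (M * D^(k+k) * ((k+k).factorial : ℝ) * 2^(k+k)) with hQ
  have hQ0 : 0 ≤ Q := by
    refine mul_nonneg (norm_nonneg _) ?_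
    refine mul_nonneg (mul_nonneg (mul_nonneg hM (pow_nonneg hD.le _)) ?_) (by positivity)
    positivity
  have hFb : ∀ p : ℕ × ℕ, ‖F p‖ ≤ (Q * (4*D*|t|) ^ p.1) * (4*D*|t|) ^ p.2 := by
    rintro ⟨j, l⟩
    have hjf : (0:ℝ) < (j.factorial : ℝ) := by exact_mod_cast j.factorial_pos
    have hlf : (0:ℝ) < (l.factorial : ℝ) := by exact_mod_cast l.factorial_pos
    have hGb : ‖G (j+l)‖ ≤ ‖w 0‖ * (M * D^((j+l)+(k+k)) * (((j+l)+(k+k)).factorial : ℝ)) := by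
      refine le_trans (norm_inner_le_norm _ _) ?_
      exact mul_le_mul_of_nonneg_left (hb _) (norm_nonneg _)
    have hX : ((((j+l)+(k+k)).factorial : ℝ))
        ≤ 2^((j+l)+(k+k)) * ((2^(j+l) * ((j.factorial:ℝ) * (l.factorial:ℝ))) * ((k+k).factorial : ℝ)) := by
      refine le_trans (fact_le (j+l) (k+k)) ?_
      have h4 := fact_le j l
      gcongr
    have hGb2 : ‖G (j+l)‖ ≤ (‖w 0‖ * M * D^((j+l)+(k+k)))
        * (2^((j+l)+(k+k)) * ((2^(j+l) * ((j.factorial:ℝ) * (l.factorial:ℝ))) * ((k+k).factorial : ℝ))) := by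
      refine le_trans hGb ?_
      have hc : (0:ℝ) ≤ ‖w 0‖ * M * D^((j+l)+(k+k)) :=
        mul_nonneg (mul_nonneg (norm_nonneg _) hM) (pow_nonneg hD.le _)
      calc ‖w 0‖ * (M * D^((j+l)+(k+k)) * (((j+l)+(k+k)).factorial : ℝ))
          = (‖w 0‖ * M * D^((j+l)+(k+k))) * (((j+l)+(k+k)).factorial : ℝ) := by ring
        _ ≤ (‖w 0‖ * M * D^((j+l)+(k+k)))
            * (2^((j+l)+(k+k)) * ((2^(j+l) * ((j.factorial:ℝ) * (l.factorial:ℝ))) * ((k+k).factorial : ℝ))) :=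
            mul_le_mul_of_nonneg_left hX hc
    have h1 : ‖F (j,l)‖ = |t|^j / (j.factorial:ℝ) * (|t|^l / (l.factorial:ℝ)) * ‖G (j+l)‖ := by
      rw [hF]
      simp only [norm_mul, RCLike.norm_conj, norm_ec]
    calc ‖F (j,l)‖ = |t|^j / (j.factorial:ℝ) * (|t|^l / (l.factorial:ℝ)) * ‖G (j+l)‖ := h1
      _ ≤ |t|^j / (j.factorial:ℝ) * (|t|^l / (l.factorial:ℝ)) * ((‖w 0‖ * M * D^((j+l)+(k+k)))
            * (2^((j+l)+(k+k)) * ((2^(j+l) * ((j.factorial:ℝ) * (l.factorial:ℝ))) * ((k+k).factorial : ℝ)))) :=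
          mul_le_mul_of_nonneg_left hGb2 (by positivity)
      _ = (Q * (4*D*|t|) ^ j) * (4*D*|t|) ^ l := by
          rw [hQ]
          have h4j : ((4:ℝ)*D*|t|) ^ j = 2^j * 2^j * D^j * |t|^j := by
            rw [show ((4:ℝ)*D*|t|) = 2*2*D*|t| by norm_num]
            rw [mul_pow, mul_pow, mul_pow]
          have h4l : ((4:ℝ)*D*|t|) ^ l = 2^l * 2^l * D^l * |t|^l := by
            rw [show ((4:ℝ)*D*|t|) = 2*2*D*|t| by norm_num]
            rw [mul_pow, mul_pow, mul_pow]
          rw [h4j, h4l]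
          field_simp
          ring
  have hFs : Summable F := by
    refine Summable.of_norm (Summable.of_nonneg_of_le (fun p => norm_nonneg _) hFb ?_)
    exact Summable.mul_of_nonneg ((summable_geometric_of_lt_one hr hr1).mul_left Q)
      (summable_geometric_of_lt_one hr hr1)
      (fun j => mul_nonneg hQ0 (pow_nonneg hr _)) (fun l => pow_nonneg hr _)
  -- iterated sum equals ⟪W k, W k⟫
  have h_rows : ∀ j, Summable fun l => F (j, l) := fun j => hFs.prod_factor j
  have hrow : ∀ j, ∑' l, F (j, l) = conj (ec t j) * ⟪w (j+k), flowW t w k⟫ := by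
    intro j
    have hWin : ⟪w (j+k), flowW t w k⟫ = ∑' l, ec t l * ⟪w (j+k), w (l+k)⟫ := by
      have h := (innerSL ℂ (w (j+k))).map_tsum (flow_summable hD hb ht k)
      simpa [flowW, innerSL_apply_apply, inner_smul_right] using h
    have hpair : ∀ l, ⟪w (j+k), w (l+k)⟫ = G (j + l) := by
      intro l
      rw [pair_shift hAs hw (j+k) (l+k), hG]
      have : (j+k) + (l+k) = (j+l) + (k+k) := by omega
      rw [this]
    rw [hWin, ← tsum_mul_left]
    refine tsum_congr fun l => ?_
    rw [hF]
    simp only []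
    rw [hpair l]
    ring
  have h_iter : ⟪flowW t w k, flowW t w k⟫ = ∑' p, F p := by
    rw [Summable.tsum_prod' hFs h_rows]
    calc ⟪flowW t w k, flowW t w k⟫
        = ∑' j, conj (ec t j) * ⟪w (j+k), flowW t w k⟫ :=
          flow_inner_left hD hb ht k (flowW t w k)
      _ = ∑' j, ∑' l, F (j, l) := tsum_congr fun j => (hrow j).symm
  -- antidiagonal computation
  have hz : conj (Complex.I * (t:ℂ)) + Complex.I * (t:ℂ) = 0 := by
    simp [map_mul, Complex.conj_I, Complex.conj_ofReal]
  have hSco : ∀ n : ℕ, (∑ p ∈ Finset.HasAntidiagonal.antidiagonal n, conj (ec t p.1) * ec t p.2)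
      = (conj (Complex.I * (t:ℂ)) + Complex.I * (t:ℂ))^n / (n.factorial : ℂ) := by
    intro n
    rw [Finset.Nat.sum_antidiagonal_eq_sum_range_succ_mk, add_pow, Finset.sum_div]
    refine Finset.sum_congr rfl fun j hj => ?_
    have hjn : j ≤ n := Nat.lt_succ_iff.mp (Finset.mem_range.mp hj)
    have hfact : ((n.choose j : ℂ)) * ((j.factorial:ℂ) * (((n-j).factorial):ℂ)) = (n.factorial:ℂ) := by
      exact_mod_cast congrArg (Nat.cast : ℕ → ℂ)
        (by rw [← Nat.choose_mul_factorial_mul_factorial hjn]; ring)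
    have hj0 : ((j.factorial:ℂ)) ≠ 0 := by exact_mod_cast j.factorial_ne_zero
    have hnj0 : (((n-j).factorial:ℂ)) ≠ 0 := by exact_mod_cast (n-j).factorial_ne_zero
    have hn0 : ((n.factorial:ℂ)) ≠ 0 := by exact_mod_cast n.factorial_ne_zero
    rw [ec, ec, map_div₀, map_pow]
    rw [Complex.conj_natCast]
    field_simp
    rw [← hfact]
    ring
  have h_sigma : ∑' p, F p = G 0 := by
    have hstep1 : ∑' p, F p = ∑' n, ∑ p ∈ Finset.HasAntidiagonal.antidiagonal n, F p := by
      have h1 : ∑' (x : Σ n : ℕ, (Finset.HasAntidiagonal.antidiagonal n : Finset (ℕ×ℕ))), F x.2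
          = ∑' p, F p := Finset.HasAntidiagonal.sigmaAntidiagonalEquivProd.tsum_eq F
      have h2 : ∑' (x : Σ n : ℕ, (Finset.HasAntidiagonal.antidiagonal n : Finset (ℕ×ℕ))), F x.2
          = ∑' n, ∑' (p : (Finset.HasAntidiagonal.antidiagonal n : Finset (ℕ×ℕ))), F (p : ℕ × ℕ) :=
        Summable.tsum_sigma' (fun n => (hasSum_fintype _).summable)
          (Finset.HasAntidiagonal.sigmaAntidiagonalEquivProd.summable_iff.mpr hFs)
      rw [← h1, h2]
      refine tsum_congr fun n => ?_
      rw [tsum_fintype]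
      exact Finset.sum_finset_coe _ _
    rw [hstep1]
    have hterm : ∀ n, ∑ p ∈ Finset.HasAntidiagonal.antidiagonal n, F p
        = ((conj (Complex.I * (t:ℂ)) + Complex.I * (t:ℂ))^n / (n.factorial : ℂ)) * G n := by
      intro n
      rw [← hSco n, Finset.sum_mul]
      refine Finset.sum_congr rfl fun p hp => ?_
      rw [hF]
      simp only []
      rw [Finset.HasAntidiagonal.mem_antidiagonal.mp hp]
    calc ∑' n, ∑ p ∈ Finset.HasAntidiagonal.antidiagonal n, F p
        = ∑' n, ((conj (Complex.I * (t:ℂ)) + Complex.I * (t:ℂ))^n / (n.factorial : ℂ)) * G n :=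
          tsum_congr hterm
      _ = G 0 := by
          rw [tsum_eq_single 0]
          · simp
          · intro n hn
            obtain ⟨m, rfl⟩ := Nat.exists_eq_succ_of_ne_zero hn
            rw [hz, zero_pow (Nat.succ_ne_zero m), zero_div, zero_mul]
  have hinner : ⟪flowW t w k, flowW t w k⟫ = ⟪w k, w k⟫ := by
    rw [h_iter, h_sigma, hG]
    simp only []
    rw [pair_shift hAs hw k k]
    norm_num
  have hsq : ‖flowW t w k‖^2 = ‖w k‖^2 := by
    have h1 := inner_self_eq_norm_sq_to_K (𝕜 := ℂ) (flowW t w k)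
    have h2 := inner_self_eq_norm_sq_to_K (𝕜 := ℂ) (w k)
    rw [h1, h2] at hinner
    exact_mod_cast hinner
  calc ‖flowW t w k‖ = Real.sqrt (‖flowW t w k‖^2) := (Real.sqrt_sq (norm_nonneg _)).symm
    _ = Real.sqrt (‖w k‖^2) := by rw [hsq]
    _ = ‖w k‖ := Real.sqrt_sq (norm_nonneg _)

lemma key {A : K →ₗ.[ℂ] K} (hAc : IsClosed (A.graph : Set (K × K)))
    (hAs : ∀ x y x' y' : K, (x, y) ∈ A.graph → (x', y') ∈ A.graph → ⟪y, x'⟫ = ⟪x, y'⟫)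
    {M D : ℝ} (hD : 0 < D) (φ : K) (μ : ℂ)
    (hμ : μ = Complex.I ∨ μ = -Complex.I)
    (hφ : ∀ x y : K, (x,y) ∈ A.graph → ⟪φ, y⟫ = μ * ⟪φ, x⟫)
    (w : ℕ → K) (hw : ∀ k, (w k, w (k+1)) ∈ A.graph)
    (hb : ∀ k, ‖w k‖ ≤ M * D ^ k * (k.factorial : ℝ)) :
    ⟪φ, w 0⟫ = 0 := by
  classical
  set t : ℝ := if μ = Complex.I then -(8*D)⁻¹ else (8*D)⁻¹ with htdef
  have h8 : (0:ℝ) < (8*D)⁻¹ := by positivity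
  have ht : |t| ≤ (8*D)⁻¹ := by
    have h1 : |(8*D)⁻¹| = ((8*D)⁻¹ : ℝ) := abs_of_nonneg h8.le
    rw [htdef]
    split_ifs
    · rw [abs_neg, h1]
    · rw [h1]
  have hτ : Complex.I * t * μ = (((8*D)⁻¹ : ℝ) : ℂ) := by
    rcases hμ with h | h
    · have htval : t = -(8*D)⁻¹ := by rw [htdef, if_pos h]
      rw [h, htval]
      rw [Complex.ofReal_neg]
      calc Complex.I * (-(((8*D)⁻¹:ℝ):ℂ)) * Complex.I
          = (Complex.I * Complex.I) * (-(((8*D)⁻¹:ℝ):ℂ)) := by ring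
        _ = (((8*D)⁻¹:ℝ):ℂ) := by rw [Complex.I_mul_I]; ring
    · have hne : μ ≠ Complex.I := by
        rw [h]; intro hcon
        have := congrArg Complex.im hcon
        simp at this
        norm_num at this
      have htval : t = (8*D)⁻¹ := by rw [htdef, if_neg hne]
      rw [h, htval]
      calc Complex.I * (((8*D)⁻¹:ℝ):ℂ) * (-Complex.I)
          = -(Complex.I * Complex.I) * (((8*D)⁻¹:ℝ):ℂ) := by ring
        _ = (((8*D)⁻¹:ℝ):ℂ) := by rw [Complex.I_mul_I]; ring
  set u : ℕ → ℕ → K := fun m => (flowW t)^[m] w with hu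
  have hInv : ∀ m, (∀ k, (u m k, u m (k+1)) ∈ A.graph) ∧ (∀ k, ‖u m k‖ = ‖w k‖) ∧
      ⟪φ, u m 0⟫ = Complex.exp (Complex.I * t * μ) ^ m * ⟪φ, w 0⟫ := by
    intro m; induction m with
    | zero => exact ⟨hw, fun k => rfl, by simp [hu]⟩
    | succ m ih =>
      obtain ⟨ihg, ihn, ihi⟩ := ih
      have hbm : ∀ k, ‖u m k‖ ≤ M * D ^ k * (k.factorial : ℝ) := fun k => (ihn k).le.trans (hb k)
      have hstep : u (m+1) = flowW t (u m) := by
        rw [hu]; exact Function.iterate_succ_apply' _ _ _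
      refine ⟨?_, ?_, ?_⟩
      · intro k; rw [hstep]; exact flow_graph hAc ihg hD hbm ht k
      · intro k; rw [hstep, flow_norm_eq hAs ihg hD hbm ht k]; exact ihn k
      · rw [hstep, flow_inner hφ ihg hD hbm ht, ihi, pow_succ]; ring
  by_contra h0
  have hbound : ∀ m : ℕ, Real.exp ((8*D)⁻¹) ^ m * ‖⟪φ, w 0⟫‖ ≤ ‖φ‖ * ‖w 0‖ := by
    intro m
    obtain ⟨hg, hn, hi⟩ := hInv m
    have h1 : ‖⟪φ, u m 0⟫‖ ≤ ‖φ‖ * ‖u m 0‖ := norm_inner_le_norm _ _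
    rw [hn 0, hi, norm_mul, norm_pow] at h1
    have h2 : ‖Complex.exp (Complex.I * t * μ)‖ = Real.exp ((8*D)⁻¹) := by
      rw [hτ, Complex.norm_exp, Complex.ofReal_re]
    rw [h2] at h1
    exact h1
  have hexp1 : 1 < Real.exp ((8*D)⁻¹) := by
    calc (1:ℝ) = Real.exp 0 := Real.exp_zero.symm
      _ < Real.exp ((8*D)⁻¹) := Real.exp_lt_exp.mpr h8
  obtain ⟨m, hm⟩ := pow_unbounded_of_one_lt (‖φ‖ * ‖w 0‖ / ‖⟪φ, w 0⟫‖) hexp1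
  have hpos : 0 < ‖⟪φ, w 0⟫‖ := norm_pos_iff.mpr h0
  rw [div_lt_iff₀ hpos] at hm
  linarith [hbound m]

end Flow

lemma isClosable_of_symmetric {T : K →ₗ.[ℂ] K} (hd : Dense (T.domain : Set K))
    (hs : ∀ x y : T.domain, ⟪T x, (y:K)⟫ = ⟪(x:K), T y⟫) : T.IsClosable := by
  refine ⟨(T.graph.topologicalClosure).toLinearPMap, (Submodule.toLinearPMap_graph_eq _ ?_).symm⟩
  rintro ⟨p1, p2⟩ hp hp1
  simp only at hp1
  subst hp1
  have hp' : ((0:K), p2) ∈ closure (T.graph : Set (K×K)) := by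
    rw [← Submodule.topologicalClosure_coe]; exact hp
  have hzero : ∀ y : T.domain, ⟪p2, (y:K)⟫ = 0 := by
    intro y
    have hcont : Continuous fun q : K × K => ⟪q.2, (y:K)⟫ - ⟪q.1, T y⟫ :=
      (Continuous.inner continuous_snd continuous_const).sub
        (Continuous.inner continuous_fst continuous_const)
    have hsub : (T.graph : Set (K×K)) ⊆ {q : K × K | ⟪q.2, (y:K)⟫ - ⟪q.1, T y⟫ = 0} := by
      rintro ⟨q1, q2⟩ hq
      obtain ⟨z, hz1, hz2⟩ := T.mem_graph_iff.mp hq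
      simp only [Set.mem_setOf_eq]
      subst hz1
      subst hz2
      rw [hs z y]
      ring
    have hcl := closure_minimal hsub (isClosed_eq hcont continuous_const)
    have := hcl hp'
    simp only [Set.mem_setOf_eq, inner_zero_left, sub_zero] at this
    exact this
  exact hd.eq_zero_of_inner_left ℂ (fun v hv => hzero ⟨v, hv⟩)

lemma closure_symm {T : K →ₗ.[ℂ] K}
    (hs : ∀ x y : T.domain, ⟪T x, (y:K)⟫ = ⟪(x:K), T y⟫) :
    ∀ p q : K × K, p ∈ closure (T.graph : Set (K×K)) → q ∈ closure (T.graph : Set (K×K)) →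
      ⟪p.2, q.1⟫ = ⟪p.1, q.2⟫ := by
  have step1 : ∀ q ∈ (T.graph : Set (K×K)), ∀ p ∈ closure (T.graph : Set (K×K)),
      ⟪p.2, q.1⟫ = ⟪p.1, q.2⟫ := by
    rintro ⟨q1, q2⟩ hq p hp
    obtain ⟨z, hz1, hz2⟩ := T.mem_graph_iff.mp hq
    have hcont : Continuous fun r : K × K => ⟪r.2, q1⟫ - ⟪r.1, q2⟫ :=
      (Continuous.inner continuous_snd continuous_const).sub
        (Continuous.inner continuous_fst continuous_const)
    have hsub : (T.graph : Set (K×K)) ⊆ {r : K × K | ⟪r.2, q1⟫ - ⟪r.1, q2⟫ = 0} := by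
      rintro ⟨r1, r2⟩ hr
      obtain ⟨z', hz1', hz2'⟩ := T.mem_graph_iff.mp hr
      simp only [Set.mem_setOf_eq]
      subst hz1; subst hz2; subst hz1'; subst hz2'
      rw [hs z' z]
      ring
    have := closure_minimal hsub (isClosed_eq hcont continuous_const) hp
    simp only [Set.mem_setOf_eq] at this
    exact sub_eq_zero.mp this
  rintro ⟨p1, p2⟩ ⟨q1, q2⟩ hp hq
  have hcont : Continuous fun r : K × K => ⟪p2, r.1⟫ - ⟪p1, r.2⟫ :=
    (Continuous.inner continuous_const continuous_fst).sub
      (Continuous.inner continuous_const continuous_snd)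
  have hsub : (T.graph : Set (K×K)) ⊆ {r : K × K | ⟪p2, r.1⟫ - ⟪p1, r.2⟫ = 0} := by
    intro r hr
    have h := step1 r hr (p1, p2) hp
    simp only [Set.mem_setOf_eq]
    exact sub_eq_zero.mpr h
  have := closure_minimal hsub (isClosed_eq hcont continuous_const) hq
  simp only [Set.mem_setOf_eq] at this
  exact sub_eq_zero.mp this

end Stmt7Aux




/-!
STATEMENT 7: Let `s` be a densely defined symmetric operator on a Hilbert space `K` and
`(K_n)` an increasing sequence of closed subspaces with dense union such that `s` maps `K_n`
into `K_{n+1}` with `‖s η‖ ≤ C (n+1) ‖η‖` for `η ∈ K_n`.  Then every vector of `⋃ n K_n` is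
an analytic vector for `s`, and `s` is essentially self-adjoint on `⋃ n K_n` (i.e. the
closure of the restriction of `s` to `⋃ n K_n` is self-adjoint).
-/
open Stmt7Aux in
theorem stmt7 {K : Type*} [NormedAddCommGroup K] [InnerProductSpace ℂ K] [CompleteSpace K]
    (s : K →ₗ.[ℂ] K)
    (hdense : Dense (s.domain : Set K))
    -- `s` is symmetric
    (hsym : ∀ (x y : s.domain), (inner ℂ (s x) (y : K) : ℂ) = inner ℂ (x : K) (s y))
    (Ksub : ℕ → Submodule ℂ K) (hKclosed : ∀ n, IsClosed (Ksub n : Set K))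
    (hKmono : Monotone Ksub)
    (hKdense : Dense (⋃ n, (Ksub n : Set K)))
    (hKdom : ∀ n, (Ksub n : Set K) ⊆ s.domain)
    (hmap : ∀ n x (hx : x ∈ Ksub n), s ⟨x, hKdom n hx⟩ ∈ Ksub (n + 1))
    (C : ℝ) (hC : 0 < C)
    (hbound : ∀ n x (hx : x ∈ Ksub n), ‖s ⟨x, hKdom n hx⟩‖ ≤ C * (n + 1) * ‖x‖) :
    -- every vector in `⋃ n K_n` is analytic for `s`
    (∀ x ∈ ⋃ n, (Ksub n : Set K), ∃ t > (0 : ℝ), ∃ u : ℕ → K, u 0 = x ∧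
      (∀ k, ∃ hk : u k ∈ s.domain, u (k + 1) = s ⟨u k, hk⟩) ∧
      Summable (fun k => ‖u k‖ * t ^ k / (Nat.factorial k : ℝ))) ∧
    -- `s` is essentially self-adjoint on `⋃ n K_n`
    (s.domRestrict (⨆ n, Ksub n)).IsClosable ∧
    IsSelfAdjoint (s.domRestrict (⨆ n, Ksub n)).closure := by

  classical
  have hdir : Directed (· ≤ ·) Ksub := hKmono.directed_le
  set P : Submodule ℂ K := ⨆ n, Ksub n with hPdef
  have hPcoe : (P : Set K) = ⋃ n, (Ksub n : Set K) := Submodule.coe_iSup_of_directed Ksub hdir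
  have hPdense : Dense (P : Set K) := by rw [hPcoe]; exact hKdense
  have hPle : P ≤ s.domain := by
    rw [hPdef]; exact iSup_le fun n x hx => hKdom n hx
  set T := s.domRestrict P with hTdef
  have hTdom : T.domain = P := by
    rw [hTdef, LinearPMap.domRestrict_domain]; exact inf_eq_left.mpr hPle
  have hTdense : Dense (T.domain : Set K) := by rw [hTdom]; exact hPdense
  have hTval : ∀ (x : T.domain) (hx : (x:K) ∈ s.domain), T x = s ⟨x, hx⟩ := by
    intro x hx
    exact LinearPMap.domRestrict_apply rfl
  have hTmem : ∀ x : T.domain, (x:K) ∈ s.domain := by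
    intro x
    have hx : (x:K) ∈ P ⊓ s.domain := s.domRestrict_domain ▸ x.2
    exact (Submodule.mem_inf.mp hx).2
  have hTsym : ∀ x y : T.domain, (inner ℂ (T x) (y:K) : ℂ) = inner ℂ (x:K) (T y) := by
    intro x y
    rw [hTval x (hTmem x), hTval y (hTmem y)]
    exact hsym ⟨↑x, hTmem x⟩ ⟨↑y, hTmem y⟩
  have hclosable : T.IsClosable := isClosable_of_symmetric hTdense hTsym
  set A := T.closure with hAdef
  have hgraphA : (A.graph : Set (K×K)) = closure (T.graph : Set (K×K)) := by
    rw [hAdef, ← hclosable.graph_closure_eq_closure_graph, Submodule.topologicalClosure_coe]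
  have hAc : IsClosed (A.graph : Set (K×K)) := by rw [hgraphA]; exact isClosed_closure
  have hAs : ∀ x y x' y' : K, (x, y) ∈ A.graph → (x', y') ∈ A.graph →
      (inner ℂ y x' : ℂ) = inner ℂ x y' := by
    intro x y x' y' h1 h2
    exact closure_symm hTsym (x,y) (x',y')
      (by rw [← hgraphA] at *; exact h1) (by rw [← hgraphA] at *; exact h2)
  have hTleA : T ≤ A := T.le_closure
  have hAdense : Dense (A.domain : Set K) :=
    Dense.mono (fun x hx => hTleA.1 hx) hTdense
  -- good families of iterates
  have fam : ∀ (n : ℕ) (η : K), η ∈ Ksub n → ∃ v : ℕ → K, v 0 = η ∧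
      (∀ k, ∃ hk : v k ∈ Ksub (n + k), v (k+1) = s ⟨v k, hKdom (n+k) hk⟩) ∧
      (∀ k, ‖v k‖ ≤ (2^n * ‖η‖) * (2*C)^k * (k.factorial : ℝ)) := by
    intro n η hη
    let v : ℕ → K := fun k => Nat.rec η (fun _ p => if h : p ∈ s.domain then s ⟨p, h⟩ else 0) k
    have hstep : ∀ k, v (k+1) = if h : v k ∈ s.domain then s ⟨v k, h⟩ else 0 := fun k => rfl
    have hmem : ∀ k, v k ∈ Ksub (n + k) := by
      intro k; induction k with
      | zero => exact hη
      | succ k ih =>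
        have hd : v k ∈ s.domain := hKdom (n+k) ih
        rw [hstep k, dif_pos hd]
        exact hmap (n+k) (v k) ih
    have hval : ∀ k, v (k+1) = s ⟨v k, hKdom (n+k) (hmem k)⟩ := by
      intro k
      have hd : v k ∈ s.domain := hKdom (n+k) (hmem k)
      rw [hstep k, dif_pos hd]
    have hind : ∀ k, ‖v k‖ * (n.factorial : ℝ) ≤ C^k * ((n+k).factorial : ℝ) * ‖η‖ := by
      intro k; induction k with
      | zero =>
        rw [pow_zero, one_mul, Nat.add_zero]
        exact le_of_eq (mul_comm _ _)
      | succ k ih =>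
        have h1 : ‖v (k+1)‖ ≤ C * ((n+k : ℕ) + 1) * ‖v k‖ := by
          rw [hval k]
          exact_mod_cast hbound (n+k) (v k) (hmem k)
        have hfs : ((n+(k+1)).factorial : ℝ) = ((n+k : ℕ) + 1 : ℝ) * ((n+k).factorial : ℝ) := by
          have h := Nat.factorial_succ (n+k)
          have h2 : (n+(k+1)).factorial = (n+k+1) * (n+k).factorial := h
          exact_mod_cast congrArg (Nat.cast : ℕ → ℝ) h2
        have hnn : (0:ℝ) ≤ (n.factorial : ℝ) := Nat.cast_nonneg _
        have hCk1 : (0:ℝ) ≤ C * ((n+k : ℕ) + 1) :=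
          mul_nonneg hC.le (by positivity)
        calc ‖v (k+1)‖ * (n.factorial:ℝ)
            ≤ (C * ((n+k:ℕ)+1) * ‖v k‖) * (n.factorial:ℝ) :=
              mul_le_mul_of_nonneg_right h1 hnn
          _ = (C * ((n+k:ℕ)+1)) * (‖v k‖ * (n.factorial:ℝ)) := by ring
          _ ≤ (C * ((n+k:ℕ)+1)) * (C^k * ((n+k).factorial:ℝ) * ‖η‖) :=
              mul_le_mul_of_nonneg_left ih hCk1
          _ = C^(k+1) * (((n+k:ℕ) + 1 : ℝ) * ((n+k).factorial : ℝ)) * ‖η‖ := by ring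
          _ = C^(k+1) * ((n+(k+1)).factorial : ℝ) * ‖η‖ := by rw [← hfs]
    refine ⟨v, rfl, fun k => ⟨hmem k, hval k⟩, ?_⟩
    intro k
    have h2 := hind k
    have h3 : ((n+k).factorial : ℝ) ≤ 2^(n+k) * ((n.factorial:ℝ) * (k.factorial:ℝ)) := fact_le n k
    have hn0 : (0:ℝ) < (n.factorial:ℝ) := by exact_mod_cast n.factorial_pos
    rw [← mul_le_mul_iff_of_pos_right hn0]
    calc ‖v k‖ * (n.factorial:ℝ) ≤ C^k * ((n+k).factorial:ℝ) * ‖η‖ := h2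
      _ ≤ C^k * (2^(n+k) * ((n.factorial:ℝ) * (k.factorial:ℝ))) * ‖η‖ := by
          refine mul_le_mul_of_nonneg_right
            (mul_le_mul_of_nonneg_left h3 (pow_nonneg hC.le k)) (norm_nonneg _)
      _ = (2^n * ‖η‖) * (2*C)^k * (k.factorial:ℝ) * (n.factorial:ℝ) := by ring
  -- part 1
  have part1 : ∀ x ∈ ⋃ n, (Ksub n : Set K), ∃ t > (0 : ℝ), ∃ u : ℕ → K, u 0 = x ∧
      (∀ k, ∃ hk : u k ∈ s.domain, u (k + 1) = s ⟨u k, hk⟩) ∧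
      Summable (fun k => ‖u k‖ * t ^ k / (Nat.factorial k : ℝ)) := by
    intro x hx
    obtain ⟨n, hxn⟩ := Set.mem_iUnion.mp hx
    obtain ⟨v, hv0, hvstep, hvb⟩ := fam n x hxn
    have hC4 : (0:ℝ) < (4*C)⁻¹ := by positivity
    refine ⟨(4*C)⁻¹, hC4, v, hv0, ?_, ?_⟩
    · intro k
      obtain ⟨hk, he⟩ := hvstep k
      exact ⟨hKdom (n+k) hk, he⟩
    · have hhalf : 2*C*(4*C)⁻¹ = 2⁻¹ := by
        field_simp
        ring
      refine Summable.of_nonneg_of_le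
        (fun k => div_nonneg (mul_nonneg (norm_nonneg _) (pow_nonneg hC4.le _)) (Nat.cast_nonneg _))
        (fun k => ?_)
        (((summable_geometric_of_lt_one (by norm_num) (by norm_num : (2:ℝ)⁻¹ < 1)).mul_left (2^n * ‖x‖)))
      have hkf : (0:ℝ) < (k.factorial:ℝ) := by exact_mod_cast k.factorial_pos
      calc ‖v k‖ * ((4*C)⁻¹)^k / (k.factorial:ℝ)
          ≤ ((2^n * ‖x‖) * (2*C)^k * (k.factorial:ℝ)) * ((4*C)⁻¹)^k / (k.factorial:ℝ) := by
            gcongr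
            exact hvb k
        _ = (2^n * ‖x‖) * (2*C*(4*C)⁻¹)^k := by
            rw [mul_pow]
            field_simp
            have hCk : C ^ k * C⁻¹ ^ k = 1 := by rw [← mul_pow, mul_inv_cancel₀ hC.ne', one_pow]
            have h42 : (1/4:ℝ) ^ k * 2 ^ k = (1/2) ^ k := by rw [← mul_pow]; norm_num
            linear_combination (‖x‖ * (1/4:ℝ)^k * 2^k) * hCk + ‖x‖ * h42
        _ = (2^n * ‖x‖) * (2⁻¹)^k := by rw [hhalf]
  -- deficiency vectors vanish
  have keyzero : ∀ (φ : K) (μ : ℂ), (μ = Complex.I ∨ μ = -Complex.I) →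
      (∀ x y : K, (x,y) ∈ A.graph → (inner ℂ φ y : ℂ) = μ * inner ℂ φ x) → φ = 0 := by
    intro φ μ hμ hφ
    have hCpos : (0:ℝ) < 2*C := by linarith
    refine hPdense.eq_zero_of_inner_left ℂ (fun v0 hv0 => ?_)
    obtain ⟨v, rfl⟩ : ∃ v : P, (v:K) = v0 := ⟨⟨v0, hv0⟩, rfl⟩
    have hv : (v:K) ∈ ⋃ n, (Ksub n : Set K) := by rw [← hPcoe]; exact v.2
    obtain ⟨n, hn⟩ := Set.mem_iUnion.mp hv
    obtain ⟨w, hw0, hwstep, hwb⟩ := fam n v hn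
    have hwg : ∀ k, (w k, w (k+1)) ∈ A.graph := by
      intro k
      obtain ⟨hk, he⟩ := hwstep k
      have hdomP : w k ∈ P := by
        rw [hPdef]
        exact (le_iSup Ksub (n+k)) hk
      have hdomT : w k ∈ T.domain := by rw [hTdom]; exact hdomP
      have hg1 : ((w k : K), T ⟨w k, hdomT⟩) ∈ T.graph := T.mem_graph ⟨w k, hdomT⟩
      have hval2 : T ⟨w k, hdomT⟩ = w (k+1) := by
        rw [hTval ⟨w k, hdomT⟩ (hKdom (n+k) hk)]
        exact he.symm
      rw [hval2] at hg1
      exact LinearPMap.le_graph_of_le hTleA hg1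
    have h := key hAc hAs (M := 2^n * ‖(v:K)‖) (D := 2*C) hCpos φ μ hμ hφ w hwg hwb
    rw [hw0] at h
    exact h
  -- surjectivity of A ∓ i
  have hsurj : ∀ (μ : ℂ), (μ = Complex.I ∨ μ = -Complex.I) → ∀ z : K,
      ∃ p : K × K, p ∈ A.graph ∧ p.2 - μ • p.1 = z := by
    intro μ hμ z
    have hμconj : (starRingEnd ℂ) μ + μ = 0 := by
      rcases hμ with h | h <;> rw [h] <;> simp [Complex.conj_I]
    have hμmul : (starRingEnd ℂ) μ * μ = 1 := by
      rcases hμ with h | h <;> rw [h] <;>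
        simp [Complex.conj_I, Complex.conj_neg_I, Complex.I_mul_I]
    set L : K × K →ₗ[ℂ] K := LinearMap.snd ℂ K K - μ • LinearMap.fst ℂ K K with hL
    have hLval : ∀ p : K × K, L p = p.2 - μ • p.1 := fun p => rfl
    set S : Submodule ℂ K := A.graph.map L with hS
    have hnorm : ∀ p : K × K, p ∈ A.graph → ‖p.1‖ ≤ ‖L p‖ ∧ ‖p.2‖ ≤ ‖L p‖ := by
      rintro ⟨x, y⟩ hp
      have hsym2 : (inner ℂ y x : ℂ) = inner ℂ x y := hAs _ _ _ _ hp hp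
      have hexp : (inner ℂ (y - μ•x) (y - μ•x) : ℂ) = inner ℂ x x + inner ℂ y y := by
        rw [inner_sub_sub_self, inner_smul_left, inner_smul_right, inner_smul_left,
          inner_smul_right, hsym2]
        ring_nf
        linear_combination (-(inner ℂ x y : ℂ)) * hμconj + (inner ℂ x x : ℂ) * hμmul
      have hsqeq : ‖L (x,y)‖^2 = ‖x‖^2 + ‖y‖^2 := by
        have h1 : (inner ℂ (L (x,y)) (L (x,y)) : ℂ) = inner ℂ x x + inner ℂ y y := by
          rw [hLval]; exact hexp
        rw [inner_self_eq_norm_sq_to_K, inner_self_eq_norm_sq_to_K,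
          inner_self_eq_norm_sq_to_K] at h1
        exact_mod_cast h1
      constructor
      · nlinarith [norm_nonneg (x : K), norm_nonneg (L (x,y)), sq_nonneg ‖(y : K)‖]
      · nlinarith [norm_nonneg (y : K), norm_nonneg (L (x,y)), sq_nonneg ‖(x : K)‖]
    have hLcont : Continuous fun p : K × K => L p := by
      have : (fun p : K × K => L p) = fun p : K × K => p.2 - μ • p.1 := funext hLval
      rw [this]
      exact continuous_snd.sub (continuous_fst.const_smul μ)
    have hSclosed : IsClosed (S : Set K) := by
      rw [← isSeqClosed_iff_isClosed]
      intro zs zlim hzs hzl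
      have hzs' : ∀ m, ∃ p, p ∈ A.graph ∧ L p = zs m := by
        intro m
        obtain ⟨p, hp1, hp2⟩ := Submodule.mem_map.mp (hzs m)
        exact ⟨p, hp1, hp2⟩
      choose ps hpg hpl using hzs'
      have hcauchy : CauchySeq zs := hzl.cauchySeq
      have hc1 : CauchySeq ps := by
        rw [Metric.cauchySeq_iff] at hcauchy ⊢
        intro ε hε
        obtain ⟨N, hN⟩ := hcauchy ε hε
        refine ⟨N, fun m hm n hn => ?_⟩
        have hdiff : (ps m - ps n) ∈ A.graph := Submodule.sub_mem _ (hpg m) (hpg n)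
        have hLd : L (ps m - ps n) = zs m - zs n := by rw [map_sub, hpl, hpl]
        have h1 := hnorm _ hdiff
        rw [hLd] at h1
        have h2 := hN m hm n hn
        rw [dist_eq_norm] at h2
        rw [Prod.dist_eq, dist_eq_norm, dist_eq_norm]
        exact max_lt (lt_of_le_of_lt h1.1 h2) (lt_of_le_of_lt h1.2 h2)
      obtain ⟨p, hp⟩ := cauchySeq_tendsto_of_complete hc1
      have hpgraph : p ∈ A.graph := hAc.mem_of_tendsto hp (Filter.Eventually.of_forall hpg)
      have hLp : L p = zlim := by
        have h1 : Filter.Tendsto (fun m => L (ps m)) Filter.atTop (nhds (L p)) :=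
          (hLcont.tendsto p).comp hp
        have h2 : (fun m => L (ps m)) = zs := funext hpl
        rw [h2] at h1
        exact tendsto_nhds_unique h1 hzl
      exact Submodule.mem_map.mpr ⟨p, hpgraph, hLp⟩
    haveI : CompleteSpace S := hSclosed.completeSpace_coe
    obtain ⟨y, hyS, z', hz'perp, hzeq⟩ := Submodule.exists_add_mem_mem_orthogonal (K := S) z
    have hz0 : z' = 0 := by
      refine keyzero z' μ hμ ?_
      intro x y' hxy
      have hu : (y' - μ • x) ∈ S := by
        have := Submodule.mem_map_of_mem (f := L) hxy
        rwa [hLval] at this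
      have h0 : (inner ℂ (y' - μ • x) z' : ℂ) = 0 := (Submodule.mem_orthogonal S z').mp hz'perp _ hu
      have h0' : (inner ℂ z' (y' - μ • x) : ℂ) = 0 := by
        rw [← inner_conj_symm, h0, map_zero]
      rw [inner_sub_right, inner_smul_right] at h0'
      exact sub_eq_zero.mp h0'
    have hzS : z ∈ S := by rw [hzeq, hz0, add_zero]; exact hyS
    obtain ⟨p, hpg, hpl⟩ := Submodule.mem_map.mp hzS
    refine ⟨p, hpg, ?_⟩
    rw [← hLval, hpl]
  -- assemble
  refine ⟨part1, hclosable, ?_⟩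
  rw [LinearPMap.isSelfAdjoint_def]
  have hfa2 : A.IsFormalAdjoint A := by
    intro x y
    exact hAs _ _ _ _ (A.mem_graph x) (A.mem_graph y)
  have hle1 : A ≤ LinearPMap.adjoint A := LinearPMap.IsFormalAdjoint.le_adjoint hAdense hfa2
  have hfa : (LinearPMap.adjoint A).IsFormalAdjoint A := LinearPMap.adjoint_isFormalAdjoint hAdense
  have H : ∀ (φ : K) (hφd : φ ∈ (LinearPMap.adjoint A).domain),
      ∃ hφ' : φ ∈ A.domain, LinearPMap.adjoint A ⟨φ, hφd⟩ = A ⟨φ, hφ'⟩ := by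
    intro φ hφd
    set ψ := LinearPMap.adjoint A ⟨φ, hφd⟩ with hψ
    obtain ⟨p, hpg, hpl⟩ := hsurj Complex.I (Or.inl rfl) (ψ - Complex.I • φ)
    have hpg' : (p.1, p.2) ∈ A.graph := by simpa using hpg
    have hδ : φ - p.1 = 0 := by
      refine keyzero (φ - p.1) (-Complex.I) (Or.inr rfl) ?_
      intro x y hxy
      have hx' : x ∈ A.domain := LinearPMap.mem_domain_of_mem_graph hxy
      have hAx : A ⟨x, hx'⟩ = y := by
        obtain ⟨zz, hz1, hz2⟩ := A.mem_graph_iff.mp hxy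
        have he : (⟨x, hx'⟩ : A.domain) = zz := Subtype.ext hz1.symm
        rw [he]; exact hz2
      have h1 : (inner ℂ φ y : ℂ) = inner ℂ ψ x := by
        have h := hfa ⟨φ, hφd⟩ ⟨x, hx'⟩
        rw [hAx] at h
        exact h.symm
      have h2 : (inner ℂ p.1 y : ℂ) = inner ℂ p.2 x := (hAs p.1 p.2 x y hpg' hxy).symm
      have h3 : ψ - p.2 = Complex.I • φ - Complex.I • p.1 := by
        have h4 := sub_eq_sub_iff_add_eq_add.mp hpl
        rw [sub_eq_sub_iff_add_eq_add]
        calc ψ + Complex.I • p.1 = p.2 + Complex.I • φ := h4.symm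
          _ = Complex.I • φ + p.2 := add_comm _ _
      calc (inner ℂ (φ - p.1) y : ℂ) = inner ℂ φ y - inner ℂ p.1 y := inner_sub_left _ _ _
        _ = (inner ℂ ψ x : ℂ) - inner ℂ p.2 x := by rw [h1, h2]
        _ = (inner ℂ (ψ - p.2) x : ℂ) := (inner_sub_left _ _ _).symm
        _ = (inner ℂ (Complex.I • (φ - p.1)) x : ℂ) := by rw [h3, smul_sub]
        _ = (-Complex.I) * inner ℂ (φ - p.1) x := by rw [inner_smul_left, Complex.conj_I]
    have hφeq : φ = p.1 := sub_eq_zero.mp hδ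
    have hφ' : φ ∈ A.domain := by
      rw [hφeq]; exact LinearPMap.mem_domain_of_mem_graph hpg'
    have hψval : ψ = p.2 := by
      have h4 := hpl
      rw [← hφeq] at h4
      exact (sub_left_inj.mp h4).symm
    have hAφ : A ⟨φ, hφ'⟩ = p.2 := by
      obtain ⟨zz, hz1, hz2⟩ := A.mem_graph_iff.mp hpg'
      have he : (⟨φ, hφ'⟩ : A.domain) = zz := Subtype.ext (hφeq.trans hz1.symm)
      rw [he]; exact hz2
    exact ⟨hφ', by rw [hψval, hAφ]⟩
  have hle2 : LinearPMap.adjoint A ≤ A := by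
    refine ⟨fun φ hφd => (H φ hφd).1, ?_⟩
    rintro ⟨φ, hφd⟩ y hcoe
    obtain ⟨hφ', heq⟩ := H φ hφd
    rw [heq]
    have he : (⟨φ, hφ'⟩ : A.domain) = y := Subtype.ext hcoe
    rw [he]
  exact le_antisymm hle2 hle1
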